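/- Let F : G(d) → G(d) be a linear bijection with F(d) = d and F(h*) = h*, and write φ := F|_d, ψ := F|_{h*}. Then F is simultaneously a Lie algebra automorphism of G(d) and an isometry of ⟨,⟩ if and only if: φ is a Lie algebra automorphism of d preserving ⟨,⟩_d, ψ preserves the restriction of ⟨,⟩ to h*, and φ ∘ π(h) ∘ φ^{-1} = π(ℓ^{-1}(ψ(ℓ(h)))) for all h ∈ h. -/

import Mathlib

open Module

variable {H D : Type} [LieRing H] [LieAlgebra ℝ H] [FiniteDimensional ℝ H]
  [LieRing D] [LieAlgebra ℝ D] [FiniteDimensional ℝ D]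

/-- `beta BD π x y` is the element `β(x,y)` of `h*` given by `a ↦ ⟨π(a)x, y⟩_d`. -/
def beta (BD : LinearMap.BilinForm ℝ D) (π : H →ₗ[ℝ] D →ₗ[ℝ] D) (x y : D) : Dual ℝ H :=
  (BD.flip y).comp (π.flip x)

/-- The bracket on `G(d) = d ⊕ h*`: `[x₁+α₁, x₂+α₂] = [x₁,x₂]_d + β(x₁,x₂)`. -/
def gbr (BD : LinearMap.BilinForm ℝ D) (π : H →ₗ[ℝ] D →ₗ[ℝ] D)
    (u v : D × Dual ℝ H) : D × Dual ℝ H :=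
  (⁅u.1, v.1⁆, beta BD π u.1 v.1)

/-- The inverse of the isomorphism `ℓ : h → h*`, `ℓ(h) = ⟨h,·⟩_h`. -/
noncomputable def ellInv (BH : LinearMap.BilinForm ℝ H) (hBH : BH.Nondegenerate)
    (α : Dual ℝ H) : H :=
  (LinearMap.BilinForm.toDual BH hBH).symm α

/-- The metric on `G(d)`: `⟨x₁ + ℓ(h₁), x₂ + ℓ(h₂)⟩ = ⟨h₁,h₂⟩_h + ⟨x₁,x₂⟩_d`. -/
noncomputable def gform (BH : LinearMap.BilinForm ℝ H) (hBH : BH.Nondegenerate)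
    (BD : LinearMap.BilinForm ℝ D) (u v : D × Dual ℝ H) : ℝ :=
  BD u.1 v.1 + BH (ellInv BH hBH u.2) (ellInv BH hBH v.2)

lemma beta_apply (BD : LinearMap.BilinForm ℝ D) (π : H →ₗ[ℝ] D →ₗ[ℝ] D) (x y : D) (h : H) :
    beta BD π x y h = BD (π h x) y := rfl

lemma BH_ellInv (BH : LinearMap.BilinForm ℝ H) (hBH : BH.Nondegenerate)
    (α : Dual ℝ H) (h : H) : BH (ellInv BH hBH α) h = α h := by
  unfold ellInv
  exact LinearMap.BilinForm.apply_toDual_symm_apply α h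

lemma ellInv_BH (BH : LinearMap.BilinForm ℝ H) (hBH : BH.Nondegenerate)
    (h : H) : ellInv BH hBH (BH h) = h := by
  have hcoe : BH h = LinearMap.BilinForm.toDual BH hBH h := by
    ext n
    exact (LinearMap.BilinForm.toDual_def hBH).symm
  rw [ellInv, hcoe, LinearEquiv.symm_apply_apply]

/-- Proposition 4.4: characterization of the orthogonal automorphisms of `G(d)`
preserving the splitting `d ⊕ h*`. -/
theorem orthogonal_automorphisms_of_Gd
    (BH : LinearMap.BilinForm ℝ H)
    (hBHsymm : ∀ a b : H, BH a b = BH b a)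
    (hBHnd : BH.Nondegenerate)
    (hBHinv : ∀ a b c : H, BH ⁅a, b⁆ c = - BH b ⁅a, c⁆)
    (BD : LinearMap.BilinForm ℝ D)
    (hBDsymm : ∀ x y : D, BD x y = BD y x)
    (hBDnd : BD.Nondegenerate)
    (hBDinv : ∀ x y z : D, BD ⁅x, y⁆ z = - BD y ⁅x, z⁆)
    (π : H →ₗ[ℝ] D →ₗ[ℝ] D)
    (hπder : ∀ a : H, ∀ x y : D, π a ⁅x, y⁆ = ⁅π a x, y⁆ + ⁅x, π a y⁆)
    (hπhom : ∀ a b : H, π ⁅a, b⁆ = π a ∘ₗ π b - π b ∘ₗ π a)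
    (hπskew : ∀ a : H, ∀ x y : D, BD (π a x) y = - BD x (π a y))
    -- F is a linear bijection of G(d) with F(d) = d and F(h*) = h*,
    -- φ = F|_d and ψ = F|_{h*}
    (F : (D × Dual ℝ H) ≃ₗ[ℝ] (D × Dual ℝ H))
    (φ : D →ₗ[ℝ] D) (ψ : Dual ℝ H →ₗ[ℝ] Dual ℝ H)
    (hF : ∀ u : D × Dual ℝ H, F u = (φ u.1, ψ u.2)) :
    -- F is an automorphism of G(d) and an isometry of ⟨,⟩ ...
    ((∀ u v : D × Dual ℝ H, F (gbr BD π u v) = gbr BD π (F u) (F v)) ∧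
     (∀ u v : D × Dual ℝ H, gform BH hBHnd BD (F u) (F v) = gform BH hBHnd BD u v))
    ↔
    -- ... iff φ ∈ Aut(d) ∩ O(d,⟨,⟩_d), ψ preserves ⟨,⟩|_{h*}, and
    -- φ ∘ π(h) ∘ φ⁻¹ = π(ℓ⁻¹(ψ(ℓ(h)))) for all h ∈ h
    ((∀ x y : D, φ ⁅x, y⁆ = ⁅φ x, φ y⁆) ∧
     (∀ x y : D, BD (φ x) (φ y) = BD x y) ∧
     (∀ α α' : Dual ℝ H,
       BH (ellInv BH hBHnd (ψ α)) (ellInv BH hBHnd (ψ α'))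
         = BH (ellInv BH hBHnd α) (ellInv BH hBHnd α')) ∧
     (∀ (h : H) (x : D), φ (π h x) = π (ellInv BH hBHnd (ψ (BH h))) (φ x))) := by
  -- surjectivity of φ and ψ
  have hφsurj : Function.Surjective φ := by
    intro x
    refine ⟨(F.symm (x, 0)).1, ?_⟩
    have := hF (F.symm (x, 0))
    rw [F.apply_symm_apply] at this
    exact (congrArg Prod.fst this).symm
  have hψsurj : Function.Surjective ψ := by
    intro α
    refine ⟨(F.symm (0, α)).2, ?_⟩
    have := hF (F.symm (0, α))
    rw [F.apply_symm_apply] at this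
    exact (congrArg Prod.snd this).symm
  constructor
  · rintro ⟨hA, hI⟩
    -- unpack the automorphism condition componentwise
    have hA1 : ∀ x y : D, φ ⁅x, y⁆ = ⁅φ x, φ y⁆ := by
      intro x y
      have := hA (x, 0) (y, 0)
      simp only [hF, gbr] at this
      exact congrArg Prod.fst this
    have hA2 : ∀ x y : D, ψ (beta BD π x y) = beta BD π (φ x) (φ y) := by
      intro x y
      have := hA (x, 0) (y, 0)
      simp only [hF, gbr] at this
      exact congrArg Prod.snd this
    -- the isometry condition
    have hI1 : ∀ x y : D, BD (φ x) (φ y) = BD x y := by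
      intro x y
      have := hI (x, 0) (y, 0)
      simp only [hF, gform, map_zero] at this
      simpa [ellInv] using this
    have hI2 : ∀ α α' : Dual ℝ H,
        BH (ellInv BH hBHnd (ψ α)) (ellInv BH hBHnd (ψ α'))
          = BH (ellInv BH hBHnd α) (ellInv BH hBHnd α') := by
      intro α α'
      have := hI (0, α) (0, α')
      simp only [hF, gform, map_zero] at this
      simpa using this
    refine ⟨hA1, hI1, hI2, ?_⟩
    intro h x
    set k := ellInv BH hBHnd (ψ (BH h)) with hk
    have key : ∀ y : D, BD (φ (π h x)) (φ y) = BD (π k (φ x)) (φ y) := by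
      intro y
      calc BD (φ (π h x)) (φ y)
          = BD (π h x) y := hI1 _ _
        _ = beta BD π x y h := rfl
        _ = BH (ellInv BH hBHnd (beta BD π x y)) h := (BH_ellInv _ _ _ _).symm
        _ = BH (ellInv BH hBHnd (beta BD π x y)) (ellInv BH hBHnd (BH h)) := by
              rw [ellInv_BH]
        _ = BH (ellInv BH hBHnd (ψ (beta BD π x y)))
              (ellInv BH hBHnd (ψ (BH h))) := (hI2 _ _).symm
        _ = BH (ellInv BH hBHnd (beta BD π (φ x) (φ y))) k := by rw [hA2, hk]
        _ = beta BD π (φ x) (φ y) k := BH_ellInv _ _ _ _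
        _ = BD (π k (φ x)) (φ y) := rfl
    have hz : ∀ z : D, BD (φ (π h x) - π k (φ x)) z = 0 := by
      intro z
      obtain ⟨y, rfl⟩ := hφsurj z
      rw [map_sub, LinearMap.sub_apply, key, sub_self]
    exact sub_eq_zero.mp (hBDnd.1 _ hz)
  · rintro ⟨h1, h2, h3, h4⟩
    constructor
    · intro u v
      rw [hF, hF, hF]
      simp only [gbr]
      refine Prod.ext (h1 _ _) ?_
      -- ψ (beta x y) = beta (φ x) (φ y)
      ext h
      obtain ⟨αk, hαk⟩ := hψsurj (BH h)
      set k := ellInv BH hBHnd αk with hkdef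
      have hαk' : αk = BH k := by
        apply (LinearMap.BilinForm.toDual BH hBHnd).symm.injective
        show ellInv BH hBHnd αk = ellInv BH hBHnd (BH k)
        rw [ellInv_BH]
      have hkey : ellInv BH hBHnd (ψ (BH k)) = h := by
        rw [← hαk', hαk, ellInv_BH]
      calc ψ (beta BD π u.1 v.1) h
          = BH (ellInv BH hBHnd (ψ (beta BD π u.1 v.1))) h := (BH_ellInv _ _ _ _).symm
        _ = BH (ellInv BH hBHnd (ψ (beta BD π u.1 v.1)))
              (ellInv BH hBHnd (ψ (BH k))) := by rw [hkey]
        _ = BH (ellInv BH hBHnd (beta BD π u.1 v.1)) (ellInv BH hBHnd (BH k)) := h3 _ _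
        _ = BH (ellInv BH hBHnd (beta BD π u.1 v.1)) k := by rw [ellInv_BH]
        _ = beta BD π u.1 v.1 k := BH_ellInv _ _ _ _
        _ = BD (π k u.1) v.1 := rfl
        _ = BD (φ (π k u.1)) (φ v.1) := (h2 _ _).symm
        _ = BD (π h (φ u.1)) (φ v.1) := by rw [h4 k u.1, hkey]
        _ = beta BD π (φ u.1) (φ v.1) h := rfl
    · intro u v
      rw [hF, hF]
      simp only [gform]
      rw [h2, h3]
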